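/- Let a,b be positive integers and Row(x,y) = ((x-1) mod a, (y-1) mod b) act on {0,…,a-1}×{0,…,b-1}. Define peak(x,y) = 3 - [x=0] - [x=a-1] - [y=0] - [y=b-1]. Then for every orbit O of Row, the sum of peak over the elements of O equals (3ab - 2a - 2b)/gcd(a,b). -/

import Mathlib

lemma count_aux (c L : ℕ) (hc : 0 < c) (hcL : c ∣ L) (w : ZMod c) :
    ∑ k ∈ Finset.range L, (if (k : ZMod c) = w then 1 else 0) = L / c := by
  haveI : NeZero c := ⟨hc.ne'⟩
  have hw : ∀ k : ℕ, ((k : ZMod c) = w) ↔ k ≡ w.val [MOD c] := by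
    intro k
    conv_lhs => rw [← ZMod.natCast_zmod_val w]
    exact ZMod.natCast_eq_natCast_iff _ _ _
  simp only [hw]
  rw [Finset.sum_boole, Nat.cast_id, ← Nat.count_eq_card_filter_range,
    Nat.count_modEq_card _ hc]
  simp [Nat.mod_eq_zero_of_dvd hcL]

lemma cast_peak (i1 i2 i3 i4 : ℕ) (h1 : i1 ≤ 1) (h2 : i2 ≤ 1) (h3 : i3 ≤ 1)
    (h4 : i4 ≤ 1) (h : i1 + i2 + i3 + i4 ≤ 3) :
    ((3 - i1 - i2 - i3 - i4 : ℕ) : ℤ) = 3 - i1 - i2 - i3 - i4 := by omega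

theorem stmt_2 (a b : ℕ) (ha : 0 < a) (hb : 0 < b) :
    let Row : ZMod a × ZMod b → ZMod a × ZMod b := fun z => (z.1 - 1, z.2 - 1)
    let peak : ZMod a × ZMod b → ℕ := fun z =>
      3 - (if z.1 = 0 then 1 else 0) - (if z.1 = (a : ZMod a) - 1 then 1 else 0)
        - (if z.2 = 0 then 1 else 0) - (if z.2 = (b : ZMod b) - 1 then 1 else 0)
    ∀ z : ZMod a × ZMod b,
      (∑ᶠ w ∈ ({w | ∃ k : ℕ, Row^[k] z = w} : Set (ZMod a × ZMod b)), peak w)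
        = (3 * a * b - 2 * a - 2 * b) / Nat.gcd a b := by
  intro Row peak z
  set L := Nat.lcm a b with hLdef
  have hLa : a ∣ L := Nat.dvd_lcm_left a b
  have hLb : b ∣ L := Nat.dvd_lcm_right a b
  have hL0 : 0 < L := Nat.pos_of_ne_zero (Nat.lcm_ne_zero ha.ne' hb.ne')
  -- iterate formula
  have hiter : ∀ k : ℕ, Row^[k] z = (z.1 - (k : ZMod a), z.2 - (k : ZMod b)) := by
    intro k
    induction k with
    | zero => simp
    | succ n ih =>
      rw [Function.iterate_succ_apply', ih]
      simp only [Row, Nat.cast_succ]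
      exact Prod.ext (by ring) (by ring)
  -- the orbit as a finset image
  have hinj : Set.InjOn (fun k : ℕ => ((z.1 - (k : ZMod a), z.2 - (k : ZMod b)) : ZMod a × ZMod b))
      ↑(Finset.range L) := by
    intro j hj k hk h
    simp only [Finset.coe_range, Set.mem_Iio] at hj hk
    simp only [Prod.mk.injEq] at h
    have h1 : (j : ZMod a) = (k : ZMod a) := by
      have := h.1; rwa [sub_right_inj] at this
    have h2 : (j : ZMod b) = (k : ZMod b) := by
      have := h.2; rwa [sub_right_inj] at this
    rw [ZMod.natCast_eq_natCast_iff] at h1 h2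
    have hdL : ((L : ℕ) : ℤ) ∣ (k : ℤ) - j := by
      have := Int.lcm_dvd (Int.dvd_natAbs.mpr ((Nat.modEq_iff_dvd).mp h1)) (Int.dvd_natAbs.mpr ((Nat.modEq_iff_dvd).mp h2))
      rw [Int.natCast_dvd]
      simpa [Int.lcm, Int.natAbs_natCast, hLdef] using this
    have : j ≡ k [MOD L] := (Nat.modEq_iff_dvd).mpr hdL
    rw [Nat.ModEq, Nat.mod_eq_of_lt hj, Nat.mod_eq_of_lt hk] at this
    exact this
  have hset : ({w | ∃ k : ℕ, Row^[k] z = w} : Set (ZMod a × ZMod b)) =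
      ↑((Finset.range L).image
        (fun k : ℕ => ((z.1 - (k : ZMod a), z.2 - (k : ZMod b)) : ZMod a × ZMod b))) := by
    ext w
    simp only [Set.mem_setOf_eq, Finset.coe_image, Set.mem_image, Finset.coe_range,
      Set.mem_Iio]
    constructor
    · rintro ⟨k, rfl⟩
      refine ⟨k % L, Nat.mod_lt _ hL0, ?_⟩
      rw [hiter]
      have e1 : ((k % L : ℕ) : ZMod a) = (k : ZMod a) := by
        rw [ZMod.natCast_eq_natCast_iff]
        exact (Nat.mod_modEq k L).of_dvd hLa
      have e2 : ((k % L : ℕ) : ZMod b) = (k : ZMod b) := by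
        rw [ZMod.natCast_eq_natCast_iff]
        exact (Nat.mod_modEq k L).of_dvd hLb
      rw [e1, e2]
    · rintro ⟨k, _, rfl⟩
      exact ⟨k, hiter k⟩
  rw [hset, finsum_mem_coe_finset, Finset.sum_image (fun x hx y hy h => hinj hx hy h)]
  -- now a finite sum over range L
  set g := Nat.gcd a b with hgdef
  have hg0 : 0 < g := Nat.gcd_pos_of_pos_left b ha
  have hga : g ∣ a := Nat.gcd_dvd_left a b
  have hgb : g ∣ b := Nat.gcd_dvd_right a b
  have hgL : (g : ℤ) * L = (a : ℤ) * b := by exact_mod_cast congrArg (Nat.cast : ℕ → ℤ) (Nat.gcd_mul_lcm a b)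
  have haL : (a : ℤ) * (L / a : ℕ) = (L : ℤ) := by exact_mod_cast congrArg (Nat.cast : ℕ → ℤ) (Nat.mul_div_cancel' hLa)
  have hbL : (b : ℤ) * (L / b : ℕ) = (L : ℤ) := by exact_mod_cast congrArg (Nat.cast : ℕ → ℤ) (Nat.mul_div_cancel' hLb)
  have hgp : (g : ℤ) * (L / a : ℕ) = (b : ℤ) := by
    have ha' : (a : ℤ) ≠ 0 := by exact_mod_cast ha.ne'
    have : (a : ℤ) * ((g : ℤ) * (L / a : ℕ)) = (a : ℤ) * b := by
      rw [show (a : ℤ) * ((g : ℤ) * (L / a : ℕ)) = (g : ℤ) * ((a : ℤ) * (L / a : ℕ)) by ring,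
        haL, hgL]
    exact mul_left_cancel₀ ha' this
  have hgq : (g : ℤ) * (L / b : ℕ) = (a : ℤ) := by
    have hb' : (b : ℤ) ≠ 0 := by exact_mod_cast hb.ne'
    have : (b : ℤ) * ((g : ℤ) * (L / b : ℕ)) = (b : ℤ) * a := by
      rw [show (b : ℤ) * ((g : ℤ) * (L / b : ℕ)) = (g : ℤ) * ((b : ℤ) * (L / b : ℕ)) by ring,
        hbL, hgL]
      ring
    exact mul_left_cancel₀ hb' this
  by_cases hab : a = 1 ∧ b = 1
  · obtain ⟨rfl, rfl⟩ := hab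
    simp [peak, Subsingleton.elim _ (0 : ZMod 1)]
  -- main case
  have h3 : 2 * a + 2 * b ≤ 3 * a * b := by
    rcases Nat.lt_or_ge a 2 with h | h
    · interval_cases a
      · simp at hab
        omega
    · nlinarith
  -- sums of the four indicators
  have key1 : ∀ (t : ZMod a), ∑ k ∈ Finset.range L, (if z.1 - (k : ZMod a) = t then 1 else 0) = L / a := by
    intro t
    rw [← count_aux a L ha hLa (z.1 - t)]
    refine Finset.sum_congr rfl fun k _ => ?_
    congr 1
    rw [eq_iff_iff]
    constructor
    · intro h; rw [← h]; ring
    · intro h; rw [h]; ring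
  have key2 : ∀ (t : ZMod b), ∑ k ∈ Finset.range L, (if z.2 - (k : ZMod b) = t then 1 else 0) = L / b := by
    intro t
    rw [← count_aux b L hb hLb (z.2 - t)]
    refine Finset.sum_congr rfl fun k _ => ?_
    congr 1
    rw [eq_iff_iff]
    constructor
    · intro h; rw [← h]; ring
    · intro h; rw [h]; ring
  -- bound on indicators pointwise
  have hbound : ∀ (w1 : ZMod a) (w2 : ZMod b),
      (if w1 = 0 then 1 else 0) + (if w1 = (a : ZMod a) - 1 then 1 else 0)
        + (if w2 = 0 then 1 else 0) + (if w2 = (b : ZMod b) - 1 then 1 else 0) ≤ 3 := by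
    intro w1 w2
    split_ifs with c1 c2 c3 c4 <;> try omega
    exfalso
    have ea : (1 : ZMod a) = 0 := by
      have hx : ((a : ZMod a)) = 0 := ZMod.natCast_self a
      rw [c1] at c2
      rw [hx] at c2
      linear_combination c2
    have eb : (1 : ZMod b) = 0 := by
      have hx : ((b : ZMod b)) = 0 := ZMod.natCast_self b
      rw [c3] at c4
      rw [hx] at c4
      linear_combination c4
    have ha1 : a = 1 := by
      exact Nat.dvd_one.mp ((ZMod.natCast_eq_zero_iff 1 a).mp (by exact_mod_cast ea))
    have hb1 : b = 1 := by
      exact Nat.dvd_one.mp ((ZMod.natCast_eq_zero_iff 1 b).mp (by exact_mod_cast eb))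
    exact hab ⟨ha1, hb1⟩
  -- cast the whole sum to ℤ
  have hcast : ((∑ k ∈ Finset.range L,
      peak (z.1 - (k : ZMod a), z.2 - (k : ZMod b)) : ℕ) : ℤ)
      = 3 * L - 2 * (L / a : ℕ) - 2 * (L / b : ℕ) := by
    rw [Nat.cast_sum]
    have : ∀ k ∈ Finset.range L,
        ((peak (z.1 - (k : ZMod a), z.2 - (k : ZMod b)) : ℕ) : ℤ)
          = 3 - (if z.1 - (k : ZMod a) = 0 then (1:ℤ) else 0)
            - (if z.1 - (k : ZMod a) = (a : ZMod a) - 1 then 1 else 0)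
            - (if z.2 - (k : ZMod b) = 0 then 1 else 0)
            - (if z.2 - (k : ZMod b) = (b : ZMod b) - 1 then 1 else 0) := by
      intro k _
      have hb' := hbound (z.1 - (k : ZMod a)) (z.2 - (k : ZMod b))
      simp only [peak]
      rw [cast_peak _ _ _ _ (by split <;> omega) (by split <;> omega) (by split <;> omega)
        (by split <;> omega) (by omega)]
      push_cast
      split <;> split <;> split <;> split <;> norm_num
    rw [Finset.sum_congr rfl this]
    simp only [Finset.sum_sub_distrib, Finset.sum_const, Finset.card_range, nsmul_eq_mul]
    have e1 : ∑ k ∈ Finset.range L, (if z.1 - (k : ZMod a) = 0 then (1:ℤ) else 0)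
        = ((L / a : ℕ) : ℤ) := by
      rw [← key1 0]; push_cast [apply_ite]; rfl
    have e2 : ∑ k ∈ Finset.range L, (if z.1 - (k : ZMod a) = (a : ZMod a) - 1 then (1:ℤ) else 0)
        = ((L / a : ℕ) : ℤ) := by
      rw [← key1 ((a : ZMod a) - 1)]; push_cast [apply_ite]; rfl
    have e3 : ∑ k ∈ Finset.range L, (if z.2 - (k : ZMod b) = 0 then (1:ℤ) else 0)
        = ((L / b : ℕ) : ℤ) := by
      rw [← key2 0]; push_cast [apply_ite]; rfl
    have e4 : ∑ k ∈ Finset.range L, (if z.2 - (k : ZMod b) = (b : ZMod b) - 1 then (1:ℤ) else 0)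
        = ((L / b : ℕ) : ℤ) := by
      rw [← key2 ((b : ZMod b) - 1)]; push_cast [apply_ite]; rfl
    rw [e1, e2, e3, e4]
    ring
  -- compute the RHS in ℤ
  have hrhs : (((3 * a * b - 2 * a - 2 * b) / g : ℕ) : ℤ)
      = 3 * L - 2 * (L / a : ℕ) - 2 * (L / b : ℕ) := by
    have hdvd : g ∣ 3 * a * b - 2 * a - 2 * b := by
      refine Nat.dvd_sub (Nat.dvd_sub ?_ ?_) ?_
      · exact Dvd.dvd.mul_left hgb (3 * a)
      · exact hga.mul_left 2
      · exact hgb.mul_left 2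
    have hnum : ((3 * a * b - 2 * a - 2 * b : ℕ) : ℤ) = 3 * a * b - 2 * a - 2 * b := by
      have h1 : 2 * a ≤ 3 * a * b := by omega
      push_cast [Nat.cast_sub (by omega : 2 * b ≤ 3 * a * b - 2 * a), Nat.cast_sub h1]
      ring
    rw [Int.natCast_ediv, hnum]
    have : (3 : ℤ) * a * b - 2 * a - 2 * b
        = (g : ℤ) * (3 * L - 2 * (L / a : ℕ) - 2 * (L / b : ℕ)) := by
      have := hgL; have := hgp; have := hgq
      linarith [hgL, hgp, hgq, mul_comm (g : ℤ) (L : ℤ)]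
    rw [this, Int.mul_ediv_cancel_left _ (by exact_mod_cast hg0.ne')]
  have := hcast.trans hrhs.symm
  exact_mod_cast this
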